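/- Let A = {a_1 < a_2 < …} and B = {b_1 < b_2 < …} be infinite strictly increasing sequences of positive integers with b_1 > 1 such that P(A) = ℕ \ B. Suppose that for some k ≥ 1 we have P({a_1, …, a_k}) = [0, b_1 − 1] and that b_2 ≥ 2b_1 + 2. Then a_{k+1} = b_1 + 1, a_{k+2} ≤ 2b_1 + 1, P({a_1, …, a_{k+1}}) = [0, 2b_1] \ {b_1}, and P({a_1, …, a_{k+2}}) = [0, a_{k+2} + 2b_1] \ {b_1, a_{k+2} + b_1}. -/

import Mathlib

/-- The set of all finite subset sums of `A`: all sums of finitely many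
pairwise distinct elements of `A`; by convention `0 ∈ subsetSums A`. -/
def subsetSums (A : Set ℕ) : Set ℕ :=
  {n | ∃ F : Finset ℕ, ↑F ⊆ A ∧ F.sum id = n}

lemma mem_subsetSums_self {A : Set ℕ} {x : ℕ} (hx : x ∈ A) : x ∈ subsetSums A :=
  ⟨{x}, by simpa using hx, Finset.sum_singleton _ _⟩

lemma subsetSums_insert {c : ℕ} {A : Set ℕ} (hc : c ∉ A) :
    subsetSums (insert c A) = subsetSums A ∪ (fun x => c + x) '' subsetSums A := by
  ext n
  constructor
  · rintro ⟨F, hF, rfl⟩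
    by_cases hcF : c ∈ F
    · right
      refine ⟨(F.erase c).sum id, ⟨F.erase c, ?_, rfl⟩, ?_⟩
      · intro x hx
        simp only [Finset.coe_erase, Set.mem_diff, Set.mem_singleton_iff] at hx
        rcases hF hx.1 with h | h
        · exact absurd h hx.2
        · exact h
      · simpa using Finset.add_sum_erase F id hcF
    · left
      refine ⟨F, ?_, rfl⟩
      intro x hx
      rcases hF hx with h | h
      · exact absurd (h ▸ hx) hcF
      · exact h
  · rintro (⟨F, hF, rfl⟩ | ⟨x, ⟨F, hF, rfl⟩, rfl⟩)
    · exact ⟨F, fun y hy => Set.mem_insert_of_mem _ (hF hy), rfl⟩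
    · have hcF : c ∉ F := fun h => hc (hF h)
      exact ⟨insert c F, by
        intro y hy
        rcases Finset.mem_insert.mp hy with rfl | hy
        · exact Set.mem_insert _ _
        · exact Set.mem_insert_of_mem _ (hF hy), by simp [Finset.sum_insert hcF]⟩

lemma mono' {a : ℕ → ℕ} (h : ∀ n, 1 ≤ n → a n < a (n + 1)) :
    ∀ m n, 1 ≤ m → m < n → a m < a n := by
  intro m n hm hmn
  induction n with
  | zero => omega
  | succ n ih =>
    rcases Nat.lt_succ_iff_lt_or_eq.mp hmn with h' | h'
    · exact (ih h').trans (h n (by omega))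
    · subst h'; exact h m hm

theorem stmt_4 (a b : ℕ → ℕ) (k : ℕ) (hk : 1 ≤ k)
    (hamono : ∀ n, 1 ≤ n → a n < a (n + 1))
    (hapos : ∀ n, 1 ≤ n → 0 < a n)
    (hbmono : ∀ n, 1 ≤ n → b n < b (n + 1))
    (hbpos : ∀ n, 1 ≤ n → 0 < b n)
    (hb1 : 1 < b 1)
    (hPA : subsetSums (a '' {n | 1 ≤ n}) = (b '' {n | 1 ≤ n})ᶜ)
    (hPk : subsetSums (a '' Set.Icc 1 k) = Set.Icc 0 (b 1 - 1))
    (hb2 : 2 * b 1 + 2 ≤ b 2) :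
    a (k + 1) = b 1 + 1 ∧
    a (k + 2) ≤ 2 * b 1 + 1 ∧
    subsetSums (a '' Set.Icc 1 (k + 1)) = Set.Icc 0 (2 * b 1) \ {b 1} ∧
    subsetSums (a '' Set.Icc 1 (k + 2)) =
      Set.Icc 0 (a (k + 2) + 2 * b 1) \ {b 1, a (k + 2) + b 1} := by
  have hamono' := mono' hamono
  have hbmono' := mono' hbmono
  -- between b1 and b2 is not in B
  have hnotB : ∀ m, b 1 < m → m < b 2 → m ∈ subsetSums (a '' {n | 1 ≤ n}) := by
    intro m h1 h2
    rw [hPA]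
    rintro ⟨j, hj, rfl⟩
    simp only [Set.mem_setOf_eq] at hj
    rcases Nat.lt_or_ge j 2 with hj2 | hj2
    · have hj1 : j = 1 := by omega
      subst hj1; omega
    · have : b 2 ≤ b j := by
        rcases eq_or_lt_of_le hj2 with h | h
        · rw [← h]
        · exact le_of_lt (hbmono' 2 j (by omega) h)
      omega
  have hb1not : b 1 ∉ subsetSums (a '' {n | 1 ≤ n}) := by
    rw [hPA]
    exact fun h => h ⟨1, by simp, rfl⟩
  have hIccsub : ∀ m : ℕ, a '' Set.Icc 1 m ⊆ a '' {n | 1 ≤ n} :=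
    fun m => Set.image_mono (fun x hx => hx.1)
  have hnotmem : ∀ m : ℕ, a (m + 1) ∉ a '' Set.Icc 1 m := by
    rintro m ⟨j, hj, hja⟩
    simp only [Set.mem_Icc] at hj
    have := hamono' j (m + 1) hj.1 (by omega)
    omega
  have hnotmem2 : a (k + 2) ∉ a '' Set.Icc 1 (k + 1) := by
    rintro ⟨j, hj, hja⟩
    simp only [Set.mem_Icc] at hj
    have := hamono' j (k + 2) hj.1 (by omega)
    omega
  have hIccins2 : Set.Icc 1 (k + 2) = insert (k + 2) (Set.Icc 1 (k + 1)) := by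
    ext x; simp only [Set.mem_Icc, Set.mem_insert_iff]; omega
  have hIccins : ∀ m : ℕ, Set.Icc 1 (m + 1) = insert (m + 1) (Set.Icc 1 m) := by
    intro m; ext x; simp only [Set.mem_Icc, Set.mem_insert_iff]; omega
  -- a (k+1) ≤ b 1 + 1
  have hak1le : a (k + 1) ≤ b 1 + 1 := by
    obtain ⟨F, hF, hFs⟩ := hnotB (b 1 + 1) (by omega) (by omega)
    have hex : ∃ x ∈ F, x ∉ a '' Set.Icc 1 k := by
      by_contra h; push_neg at h
      have : F.sum id ∈ subsetSums (a '' Set.Icc 1 k) := ⟨F, fun x hx => h x hx, rfl⟩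
      rw [hPk] at this
      simp only [Set.mem_Icc] at this
      omega
    obtain ⟨x, hxF, hxnot⟩ := hex
    obtain ⟨j, hj, rfl⟩ := hF hxF
    simp only [Set.mem_setOf_eq] at hj
    have hjk : k + 1 ≤ j := by
      by_contra h; push_neg at h
      exact hxnot ⟨j, ⟨hj, by omega⟩, rfl⟩
    have hax : a (k + 1) ≤ a j := by
      rcases eq_or_lt_of_le hjk with h | h
      · rw [h]
      · exact le_of_lt (hamono' _ _ (by omega) h)
    have hsum : a j ≤ F.sum id := Finset.single_le_sum (f := id) (fun i _ => Nat.zero_le _) hxF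
    omega
  -- a (k+1) ≥ b 1
  have hak1ge : b 1 ≤ a (k + 1) := by
    by_contra h; push_neg at h
    have h0 : b 1 - a (k + 1) ∈ Set.Icc 0 (b 1 - 1) := by
      refine ⟨Nat.zero_le _, ?_⟩
      have := hapos (k + 1) (by omega)
      omega
    rw [← hPk] at h0
    obtain ⟨F, hF, hFs⟩ := h0
    have hnotin : a (k + 1) ∉ F := by
      intro hmem
      obtain ⟨j, hj, hja⟩ := hF hmem
      simp only [Set.mem_Icc] at hj
      have := hamono' j (k + 1) hj.1 (by omega)
      omega
    refine hb1not ⟨insert (a (k + 1)) F, ?_, ?_⟩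
    · intro y hy
      simp only [Finset.coe_insert, Set.mem_insert_iff] at hy
      rcases hy with rfl | hy
      · exact ⟨k + 1, by simp, rfl⟩
      · exact hIccsub k (hF hy)
    · rw [Finset.sum_insert hnotin, hFs]
      have := hapos (k + 1) (by omega)
      simp only [id_eq]
      omega
  have hak1ne : a (k + 1) ≠ b 1 := by
    intro h
    exact hb1not (h ▸ mem_subsetSums_self ⟨k + 1, by simp, rfl⟩)
  have hak1 : a (k + 1) = b 1 + 1 := by omega
  -- P up to k+1
  have hP1 : subsetSums (a '' Set.Icc 1 (k + 1)) = Set.Icc 0 (2 * b 1) \ {b 1} := by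
    rw [hIccins k, Set.image_insert_eq, subsetSums_insert (hnotmem k), hPk, hak1]
    ext n
    simp only [Set.mem_union, Set.mem_Icc, Set.mem_image, Set.mem_diff,
      Set.mem_singleton_iff]
    constructor
    · rintro (⟨_, h⟩ | ⟨x, ⟨_, hx⟩, rfl⟩) <;> omega
    · rintro ⟨⟨_, hn⟩, hne⟩
      by_cases h : n ≤ b 1 - 1
      · exact Or.inl ⟨Nat.zero_le _, h⟩
      · exact Or.inr ⟨n - (b 1 + 1), ⟨Nat.zero_le _, by omega⟩, by omega⟩
  -- a (k+2) ≤ 2 b1 + 1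
  have hak2le : a (k + 2) ≤ 2 * b 1 + 1 := by
    obtain ⟨F, hF, hFs⟩ := hnotB (2 * b 1 + 1) (by omega) (by omega)
    have hex : ∃ x ∈ F, x ∉ a '' Set.Icc 1 (k + 1) := by
      by_contra h; push_neg at h
      have : F.sum id ∈ subsetSums (a '' Set.Icc 1 (k + 1)) := ⟨F, fun x hx => h x hx, rfl⟩
      rw [hP1] at this
      simp only [Set.mem_diff, Set.mem_Icc, Set.mem_singleton_iff] at this
      omega
    obtain ⟨x, hxF, hxnot⟩ := hex
    obtain ⟨j, hj, rfl⟩ := hF hxF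
    simp only [Set.mem_setOf_eq] at hj
    have hjk : k + 2 ≤ j := by
      by_contra h; push_neg at h
      exact hxnot ⟨j, ⟨hj, by omega⟩, rfl⟩
    have hax : a (k + 2) ≤ a j := by
      rcases eq_or_lt_of_le hjk with h | h
      · rw [h]
      · exact le_of_lt (hamono' _ _ (by omega) h)
    have hsum : a j ≤ F.sum id := Finset.single_le_sum (f := id) (fun i _ => Nat.zero_le _) hxF
    omega
  have hak2ge : b 1 + 2 ≤ a (k + 2) := by
    have := hamono' (k + 1) (k + 2) (by omega) (by omega)
    omega
  have hP2 : subsetSums (a '' Set.Icc 1 (k + 2)) =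
      Set.Icc 0 (a (k + 2) + 2 * b 1) \ {b 1, a (k + 2) + b 1} := by
    rw [hIccins2, Set.image_insert_eq, subsetSums_insert hnotmem2, hP1]
    ext n
    simp only [Set.mem_union, Set.mem_Icc, Set.mem_image, Set.mem_diff,
      Set.mem_singleton_iff, Set.mem_insert_iff]
    constructor
    · rintro (⟨⟨_, h⟩, hne⟩ | ⟨x, ⟨⟨_, hx⟩, hxn⟩, rfl⟩) <;>
        exact ⟨⟨Nat.zero_le _, by omega⟩, by omega⟩
    · rintro ⟨⟨_, hn⟩, hne⟩
      by_cases hc : n < a (k + 2)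
      · exact Or.inl ⟨⟨Nat.zero_le _, by omega⟩, by omega⟩
      · exact Or.inr ⟨n - a (k + 2), ⟨⟨Nat.zero_le _, by omega⟩, by omega⟩, by omega⟩
  exact ⟨hak1, hak2le, hP1, hP2⟩
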